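/- Fix y, s ∈ {0,1} and a ∈ 𝒜, and assume: consistency (P-almost surely, if D = 0 then Y = Y⁰); ignorability, i.e. for all a' ∈ 𝒜, x ∈ 𝒳, and s', y', d ∈ {0,1} with P(A=a', X=x, S=s') > 0, P(Y⁰=y', D=d | A=a', X=x, S=s') = P(Y⁰=y' | A=a', X=x, S=s') · P(D=d | A=a', X=x, S=s'); and positivity, i.e. P(D=0, A=a', X=x, S=s') > 0 whenever P(A=a', X=x, S=s') > 0. Then the inverse-probability-weighted mean recovers the joint law of prediction, group label, and potential outcome: E[ 1{D=0} · 1{S=s} · 1{Y=y} · 1{A=a} / (1 − π(A, X, S)) ] = P(S=s, Y⁰=y, A=a). -/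

import Mathlib

open MeasureTheory

/-- `pr P E` is the probability of the event `E` as a real number. -/
noncomputable def pr {Ω : Type*} [MeasurableSpace Ω] (P : Measure Ω) (E : Set Ω) : ℝ :=
  (P E).toReal

/-- `cpr P E F = P(E | F) = P(E ∩ F) / P(F)`, the conditional probability of `E` given `F`. -/
noncomputable def cpr {Ω : Type*} [MeasurableSpace Ω] (P : Measure Ω) (E F : Set Ω) : ℝ :=
  pr P (E ∩ F) / pr P F

section aux
variable {Ω : Type*} [MeasurableSpace Ω] (P : Measure Ω) [IsProbabilityMeasure P]

lemma pr_nonneg (E : Set Ω) : 0 ≤ pr P E := ENNReal.toReal_nonneg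

lemma pr_mono {E F : Set Ω} (h : E ⊆ F) : pr P E ≤ pr P F :=
  ENNReal.toReal_mono (measure_ne_top P F) (measure_mono h)

lemma pr_split {B T : Set Ω} (hT : MeasurableSet T) :
    pr P (B ∩ T) + pr P (B \ T) = pr P B := by
  unfold pr
  rw [← ENNReal.toReal_add (measure_ne_top P _) (measure_ne_top P _),
    measure_inter_add_diff B hT]

end aux

/-- under consistency, ignorability, and positivity, the
inverse-probability-weighted mean recovers the joint law of prediction, group label, and
potential outcome: `E[1{D=0}·1{S=s}·1{Y=y}·1{A=a}/(1−π(A,X,S))] = P(S=s, Y⁰=y, A=a)`,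
where `π(a,x,s) = P(D=1 | A=a, X=x, S=s)` and the expectation is the series
`Σ_x P(D=0, Y=y, A=a, X=x, S=s)/(1−π(a,x,s))`.
Binary variables are modelled as `Bool`-valued, with `1 = true` and `0 = false`. -/
theorem stmt_11
    {Ω 𝒜 𝒳 : Type*} [MeasurableSpace Ω]
    [MeasurableSpace 𝒜] [MeasurableSingletonClass 𝒜] [Countable 𝒜] [Nonempty 𝒜]
    [MeasurableSpace 𝒳] [MeasurableSingletonClass 𝒳] [Countable 𝒳] [Nonempty 𝒳]
    (P : Measure Ω) [IsProbabilityMeasure P]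
    (Y0 Y D S : Ω → Bool) (A : Ω → 𝒜) (X : Ω → 𝒳)
    (hY0 : Measurable Y0) (hY : Measurable Y) (hD : Measurable D) (hS : Measurable S)
    (hA : Measurable A) (hX : Measurable X)
    (y s : Bool) (a : 𝒜)
    (hcons : ∀ᵐ ω ∂P, D ω = false → Y ω = Y0 ω)
    (hig : ∀ (a' : 𝒜) (x : 𝒳) (s' y' d : Bool),
      0 < pr P {ω | A ω = a' ∧ X ω = x ∧ S ω = s'} →
      cpr P {ω | Y0 ω = y' ∧ D ω = d} {ω | A ω = a' ∧ X ω = x ∧ S ω = s'} =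
        cpr P {ω | Y0 ω = y'} {ω | A ω = a' ∧ X ω = x ∧ S ω = s'} *
          cpr P {ω | D ω = d} {ω | A ω = a' ∧ X ω = x ∧ S ω = s'})
    (hposD : ∀ (a' : 𝒜) (x : 𝒳) (s' : Bool),
      0 < pr P {ω | A ω = a' ∧ X ω = x ∧ S ω = s'} →
      0 < pr P {ω | D ω = false ∧ A ω = a' ∧ X ω = x ∧ S ω = s'}) :
    (∑' x : 𝒳,
        pr P {ω | D ω = false ∧ S ω = s ∧ Y ω = y ∧ A ω = a ∧ X ω = x} /
          (1 - cpr P {ω | D ω = true} {ω | A ω = a ∧ X ω = x ∧ S ω = s})) =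
      pr P {ω | S ω = s ∧ Y0 ω = y ∧ A ω = a} := by
  classical
  set T : 𝒳 → Set Ω := fun x => {ω | S ω = s ∧ Y0 ω = y ∧ A ω = a ∧ X ω = x} with hT
  have key : ∀ x : 𝒳,
      pr P {ω | D ω = false ∧ S ω = s ∧ Y ω = y ∧ A ω = a ∧ X ω = x} /
        (1 - cpr P {ω | D ω = true} {ω | A ω = a ∧ X ω = x ∧ S ω = s}) = pr P (T x) := by
    intro x
    set B : Set Ω := {ω | A ω = a ∧ X ω = x ∧ S ω = s} with hBdef
    have hTx : T x = {ω | Y0 ω = y} ∩ B := by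
      ext ω; simp only [hT, hBdef, Set.mem_setOf_eq, Set.mem_inter_iff]; tauto
    by_cases hp : 0 < pr P B
    · -- positive case
      have hposD' : 0 < pr P ({ω | D ω = false} ∩ B) := by
        have := hposD a x s hp
        have he : {ω | D ω = false ∧ A ω = a ∧ X ω = x ∧ S ω = s} =
            {ω | D ω = false} ∩ B := by
          ext ω; simp only [hBdef, Set.mem_setOf_eq, Set.mem_inter_iff]
        rwa [he] at this
      have hsum : pr P ({ω | D ω = true} ∩ B) + pr P ({ω | D ω = false} ∩ B) = pr P B := by
        have h := pr_split P (B := B) (T := {ω | D ω = true})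
          (hD (measurableSet_singleton true))
        have e1 : B ∩ {ω | D ω = true} = {ω | D ω = true} ∩ B := Set.inter_comm _ _
        have e2 : B \ {ω | D ω = true} = {ω | D ω = false} ∩ B := by
          ext ω
          simp only [Set.mem_diff, Set.mem_setOf_eq, Set.mem_inter_iff, Bool.not_eq_true]
          tauto
        rw [e1, e2] at h
        exact h
      -- numerator via consistency
      set NB : Set Ω := {ω | Y0 ω = y ∧ D ω = false} ∩ B with hNB
      have hae : {ω | D ω = false ∧ S ω = s ∧ Y ω = y ∧ A ω = a ∧ X ω = x} =ᵐ[P] NB := by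
        rw [Filter.eventuallyEq_set]
        filter_upwards [hcons] with ω h
        simp only [hNB, hBdef, Set.mem_setOf_eq, Set.mem_inter_iff]
        constructor
        · rintro ⟨hd, hs', hy', ha', hx'⟩
          exact ⟨⟨(h hd) ▸ hy', hd⟩, ha', hx', hs'⟩
        · rintro ⟨⟨hy', hd⟩, ha', hx', hs'⟩
          exact ⟨hd, hs', (h hd) ▸ hy', ha', hx'⟩
      have hnum : pr P {ω | D ω = false ∧ S ω = s ∧ Y ω = y ∧ A ω = a ∧ X ω = x} =
          pr P NB := by
        unfold pr; rw [measure_congr hae]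
      have hig' := hig a x s y false hp
      rw [hnum, hTx]
      unfold cpr at hig' ⊢
      set pB := pr P B
      set qf := pr P ({ω | D ω = false} ∩ B)
      set qt := pr P ({ω | D ω = true} ∩ B)
      set r := pr P ({ω | Y0 ω = y} ∩ B)
      set n := pr P NB
      have hpB : pB ≠ 0 := ne_of_gt hp
      have hqf : qf ≠ 0 := ne_of_gt hposD'
      have hden : 1 - qt / pB = qf / pB := by
        field_simp
        linarith [hsum]
      rw [hden]
      have hig'' : n * pB = r * qf := by
        field_simp at hig'
        exact mul_right_cancel₀ hpB (by linear_combination pB * hig')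
      rw [div_div_eq_mul_div, div_eq_iff hqf]
      linarith [hig'']
    · -- zero case
      have hpB : pr P B = 0 := le_antisymm (not_lt.mp hp) (pr_nonneg P B)
      have h1 : pr P {ω | D ω = false ∧ S ω = s ∧ Y ω = y ∧ A ω = a ∧ X ω = x} = 0 := by
        refine le_antisymm ?_ (pr_nonneg P _)
        calc pr P _ ≤ pr P B := pr_mono P (by
              intro ω hω
              simp only [hBdef, Set.mem_setOf_eq] at hω ⊢
              tauto)
          _ = 0 := hpB
      have h2 : pr P (T x) = 0 := by
        refine le_antisymm ?_ (pr_nonneg P _)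
        calc pr P _ ≤ pr P B := pr_mono P (by
              intro ω hω
              simp only [hT, hBdef, Set.mem_setOf_eq] at hω ⊢
              tauto)
          _ = 0 := hpB
      rw [h1, h2, zero_div]
  rw [tsum_congr key]
  have hmeasT : ∀ x : 𝒳, MeasurableSet (T x) := fun x =>
    (hS (measurableSet_singleton s)).inter ((hY0 (measurableSet_singleton y)).inter
      ((hA (measurableSet_singleton a)).inter (hX (measurableSet_singleton x))))
  have hdisj : Pairwise (Function.onFun Disjoint T) := by
    intro i j hij
    simp only [Function.onFun]
    rw [Set.disjoint_left]
    rintro ω ⟨_, _, _, hi⟩ ⟨_, _, _, hj⟩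
    exact hij (hi ▸ hj ▸ rfl)
  have hU : {ω | S ω = s ∧ Y0 ω = y ∧ A ω = a} = ⋃ x : 𝒳, T x := by
    ext ω
    simp only [hT, Set.mem_iUnion, Set.mem_setOf_eq]
    tauto
  rw [hU]
  unfold pr
  rw [measure_iUnion hdisj hmeasT, ENNReal.tsum_toReal_eq (fun x => measure_ne_top P _)]
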